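/- Fix a rooted forest T on a finite vertex set V and a set N ⊆ V. For every vertex u, the edit cost cost(u, C) over all sets C of children of u is minimized by taking C to be exactly the set of close children of u, i.e., cost(u, C*) ≤ cost(u, C) for all C ⊆ children(u), where C* = {c child of u : cc(c) > 0}. -/

import Mathlib

open scoped Classical

/-- `u` is a strict ancestor of `w`: `u` is obtained from `w` by iterating the
parent assignment `p` at least once (and `u ≠ w`). -/
def StrictAnc {V : Type*} (p : V → V) (u w : V) : Prop :=
  u ≠ w ∧ ∃ k : ℕ, p^[k + 1] w = u

/-- `p` is the parent assignment of a rooted forest: iterating `p` from any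
vertex reaches a root (a fixed point of `p`), so there are no cycles. -/
def IsRootedForest {V : Type*} (p : V → V) : Prop :=
  ∀ v : V, ∃ n : ℕ, p^[n + 1] v = p^[n] v

/-- The subtree of `u`: all vertices having `u` as ancestor-or-equal. -/
def subtree {V : Type*} (p : V → V) (u : V) : Set V :=
  {w | u = w ∨ StrictAnc p u w}

/-- The children of `u` in the forest. -/
def children {V : Type*} (p : V → V) (u : V) : Set V :=
  {c | p c = u ∧ c ≠ u}

/-- Child closeness of `w` w.r.t. the neighbour set `N`:
`|subtree(w) ∩ N| − |subtree(w) \ N|`. -/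
noncomputable def cc {V : Type*} (p : V → V) (N : Set V) (w : V) : ℤ :=
  ((subtree p w ∩ N).ncard : ℤ) - ((subtree p w \ N).ncard : ℤ)

/-- `S(u, C)`: the union of `{u}`, the strict ancestors of `u`, and the
subtrees of the children in `C`. -/
def editSet {V : Type*} (p : V → V) (u : V) (C : Set V) : Set V :=
  insert u ({x | StrictAnc p x u} ∪ ⋃ c ∈ C, subtree p c)

/-- The edit cost `cost(u, C) = |S(u,C) \ N| + |N \ S(u,C)|`. -/
noncomputable def cost {V : Type*} (p : V → V) (N : Set V) (u : V) (C : Set V) : ℕ :=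
  (editSet p u C \ N).ncard + (N \ editSet p u C).ncard

lemma iterate_eventually {V : Type*} (p : V → V) {v : V} {n : ℕ}
    (h : p^[n+1] v = p^[n] v) : ∀ j, p^[n+j] v = p^[n] v := by
  intro j
  induction j with
  | zero => rfl
  | succ j ih =>
    have h2 : p^[n+(j+1)] v = p (p^[n+j] v) := Function.iterate_succ_apply' p (n+j) v
    rw [h2, ih, ← Function.iterate_succ_apply' p n v, h]

lemma fix_of_cycle {V : Type*} {p : V → V} (hp : IsRootedForest p) {v : V} {m : ℕ}
    (h : p^[m+1] v = v) : p v = v := by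
  obtain ⟨n, hn⟩ := hp v
  have hstab := iterate_eventually p hn
  have hper : ∀ k, p^[k*(m+1)] v = v := by
    intro k
    induction k with
    | zero => simp
    | succ k ih =>
      have : (k+1)*(m+1) = (k*(m+1)) + (m+1) := by ring
      rw [this, Function.iterate_add_apply, h, ih]
  have hv : p^[n] v = v := by
    have h1 : n ≤ n*(m+1) := Nat.le_mul_of_pos_right n (Nat.succ_pos m)
    calc p^[n] v = p^[n + (n*(m+1) - n)] v := (hstab _).symm
    _ = p^[n*(m+1)] v := by rw [Nat.add_sub_cancel' h1]
    _ = v := hper n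
  calc p v = p (p^[n] v) := by rw [hv]
  _ = p^[n+1] v := (Function.iterate_succ_apply' p n v).symm
  _ = p^[n] v := hn
  _ = v := hv

lemma child_not_iterate {V : Type*} {p : V → V} (hp : IsRootedForest p) {u c : V}
    (hc : c ∈ children p u) (m : ℕ) : p^[m] u ≠ c := by
  intro h
  have hcu : p c = u := hc.1
  have h1 : p^[m+1] u = u := by
    rw [Function.iterate_succ_apply', h, hcu]
  have h2 : p u = u := fix_of_cycle hp h1
  have h3 : p^[m] u = u := Function.iterate_fixed h2 m
  exact hc.2 (h.symm.trans h3)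

lemma child_not_iterate_child {V : Type*} {p : V → V} (hp : IsRootedForest p) {u a b : V}
    (ha : a ∈ children p u) (hb : b ∈ children p u) (l : ℕ) : p^[l+1] a ≠ b := by
  intro h
  rw [Function.iterate_succ_apply, ha.1] at h
  exact child_not_iterate hp hb l h

lemma disjoint_base_subtree {V : Type*} {p : V → V} (hp : IsRootedForest p) {u c : V}
    (hc : c ∈ children p u) :
    Disjoint (insert u {x | StrictAnc p x u}) (subtree p c) := by
  rw [Set.disjoint_left]
  rintro x (rfl | hx) hxc
  · rcases hxc with h | ⟨hne, k, hk⟩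
    · exact hc.2 h
    · exact child_not_iterate hp hc (k+1) hk
  · obtain ⟨hxu, j, hj⟩ := hx
    rcases hxc with h | ⟨hne, k, hk⟩
    · exact child_not_iterate hp hc (j+1) (hj.trans h.symm)
    · have : p^[(k+1) + (j+1)] u = c := by
        rw [Function.iterate_add_apply, hj, hk]
      exact child_not_iterate hp hc _ this

lemma disjoint_subtrees {V : Type*} {p : V → V} (hp : IsRootedForest p) {u c c' : V}
    (hc : c ∈ children p u) (hc' : c' ∈ children p u) (hne : c ≠ c') :
    Disjoint (subtree p c) (subtree p c') := by
  rw [Set.disjoint_left]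
  intro x hx hx'
  have key2 : ∀ (a b : V) (k l : ℕ), a ∈ children p u → b ∈ children p u →
      p^[k+1] x = a → p^[l+1] x = b → k < l → False := by
    intro a b k l ha hb hk hl hkl
    have h1 : p^[(l-k)] a = b := by
      rw [← hk, ← hl, ← Function.iterate_add_apply]
      congr 1
      omega
    obtain ⟨d, hd⟩ : ∃ d, l - k = d + 1 := ⟨l-k-1, by omega⟩
    rw [hd] at h1
    exact child_not_iterate_child hp ha hb d h1
  rcases hx with h | ⟨hcx, k, hk⟩
  · rcases hx' with h' | ⟨hcx', l, hl⟩
    · exact hne (h.trans h'.symm)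
    · rw [← h] at hl
      exact child_not_iterate_child hp hc hc' l hl
  · rcases hx' with h' | ⟨hcx', l, hl⟩
    · rw [← h'] at hk
      exact child_not_iterate_child hp hc' hc k hk
    · rcases lt_trichotomy k l with hlt | rfl | hlt
      · exact key2 c c' k l hc hc' hk hl hlt
      · exact hne (hk.symm.trans hl)
      · exact key2 c' c l k hc' hc hl hk hlt

lemma disjoint_editSet_subtree {V : Type*} {p : V → V} (hp : IsRootedForest p)
    {u c : V} {C : Set V} (hC : C ⊆ children p u) (hc : c ∈ children p u)
    (hcC : c ∉ C) : Disjoint (editSet p u C) (subtree p c) := by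
  rw [Set.disjoint_left]
  intro x hx hxc
  rcases hx with rfl | hx
  · exact (Set.disjoint_left.mp (disjoint_base_subtree hp hc))
      (Set.mem_insert _ _) hxc
  · rcases hx with hx | hx
    · exact (Set.disjoint_left.mp (disjoint_base_subtree hp hc))
        (Set.mem_insert_of_mem _ hx) hxc
    · simp only [Set.mem_iUnion] at hx
      obtain ⟨c', hc', hx⟩ := hx
      have hne : c' ≠ c := fun h => hcC (h ▸ hc')
      exact (Set.disjoint_left.mp (disjoint_subtrees hp (hC hc') hc hne)) hx hxc

lemma editSet_insert {V : Type*} (p : V → V) (u c : V) (C : Set V) :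
    editSet p u (insert c C) = editSet p u C ∪ subtree p c := by
  have hb : (⋃ c' ∈ (insert c C : Set V), subtree p c')
      = subtree p c ∪ ⋃ c' ∈ C, subtree p c' := Set.biUnion_insert _ _ _
  rw [editSet, hb, editSet]
  ext x
  simp only [Set.mem_insert_iff, Set.mem_union]
  tauto

lemma cost_insert {V : Type*} [Fintype V] {p : V → V} (hp : IsRootedForest p)
    (N : Set V) {u c : V} {C : Set V} (hC : C ⊆ children p u)
    (hc : c ∈ children p u) (hcC : c ∉ C) :
    (cost p N u (insert c C) : ℤ) + cc p N c = cost p N u C := by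
  set S := editSet p u C with hS
  set T := subtree p c with hT
  have hdisj : Disjoint S T := disjoint_editSet_subtree hp hC hc hcC
  have heq : editSet p u (insert c C) = S ∪ T := editSet_insert p u c C
  have h1 : ((S ∪ T) \ N).ncard = (S \ N).ncard + (T \ N).ncard := by
    rw [Set.union_diff_distrib]
    exact Set.ncard_union_eq (hdisj.mono Set.diff_subset Set.diff_subset)
  have h2 : (N \ S) = (N \ (S ∪ T)) ∪ (T ∩ N) := by
    ext x
    simp only [Set.mem_diff, Set.mem_union, Set.mem_inter_iff]
    constructor
    · rintro ⟨hxN, hxS⟩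
      by_cases hxT : x ∈ T
      · exact Or.inr ⟨hxT, hxN⟩
      · exact Or.inl ⟨hxN, fun h => h.elim hxS hxT⟩
    · rintro (⟨hxN, hxST⟩ | ⟨hxT, hxN⟩)
      · exact ⟨hxN, fun h => hxST (Or.inl h)⟩
      · exact ⟨hxN, fun h => Set.disjoint_left.mp hdisj h hxT⟩
  have h2card : (N \ S).ncard = (N \ (S ∪ T)).ncard + (T ∩ N).ncard := by
    rw [h2]
    refine Set.ncard_union_eq ?_
    rw [Set.disjoint_left]
    rintro x ⟨_, hxST⟩ ⟨hxT, _⟩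
    exact hxST (Or.inr hxT)
  have hcc : cc p N c = ((T ∩ N).ncard : ℤ) - ((T \ N).ncard : ℤ) := rfl
  simp only [cost, heq, hcc, h1, h2card]
  rw [← hS, h2card]
  push_cast
  ring

lemma cost_finset {V : Type*} [Fintype V] {p : V → V} (hp : IsRootedForest p)
    (N : Set V) (u : V) :
    ∀ s : Finset V, ↑s ⊆ children p u →
      (cost p N u ↑s : ℤ) + ∑ c ∈ s, cc p N c = (cost p N u (∅ : Set V) : ℤ) := by
  intro s
  induction s using Finset.induction_on with
  | empty => simp
  | insert _ _ hns ih =>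
    rename_i a s
    intro hsub
    rw [Finset.coe_insert] at hsub ⊢
    have ha : a ∈ children p u := hsub (Set.mem_insert _ _)
    have hs : (↑s : Set V) ⊆ children p u :=
      fun x hx => hsub (Set.mem_insert_of_mem _ hx)
    have hna : a ∉ (↑s : Set V) := by simpa using hns
    rw [Finset.sum_insert hns, ← add_assoc,
      add_comm ((cost p N u (insert a ↑s) : ℤ)) (cc p N a), add_comm (cc p N a)]
    rw [cost_insert hp N hs ha hna]
    exact ih hs

/-- For every vertex `u`, taking `C*` to be exactly the set
of close children of `u` (those with `cc(c) > 0`) minimizes the edit cost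
`cost(u, C)` over all sets `C` of children of `u`. -/
theorem cost_close_children_min {V : Type*} [Fintype V] [DecidableEq V]
    (p : V → V) (hp : IsRootedForest p) (N : Set V) (u : V)
    (C : Set V) (hC : C ⊆ children p u) :
    cost p N u {c ∈ children p u | 0 < cc p N c} ≤ cost p N u C := by
  set Cs : Set V := {c ∈ children p u | 0 < cc p N c} with hCsdef
  have hCs : Cs ⊆ children p u := Set.sep_subset _ _
  have hCfin : C.Finite := Set.toFinite C
  have hCsfin : Cs.Finite := Set.toFinite Cs
  have hCeq : (↑hCfin.toFinset : Set V) = C := hCfin.coe_toFinset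
  have hCseq : (↑hCsfin.toFinset : Set V) = Cs := hCsfin.coe_toFinset
  have e1 := cost_finset hp N u hCfin.toFinset (by rw [hCeq]; exact hC)
  have e2 := cost_finset hp N u hCsfin.toFinset (by rw [hCseq]; exact hCs)
  rw [hCeq] at e1
  rw [hCseq] at e2
  -- sum comparison
  have hsum : ∑ c ∈ hCfin.toFinset, cc p N c ≤ ∑ c ∈ hCsfin.toFinset, cc p N c := by
    classical
    have hsplit := Finset.sum_filter_add_sum_filter_not hCfin.toFinset
      (fun c => 0 < cc p N c) (fun c => cc p N c)
    have hneg : ∑ c ∈ hCfin.toFinset.filter (fun c => ¬ 0 < cc p N c),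
        cc p N c ≤ 0 := by
      apply Finset.sum_nonpos
      intro c hcmem
      have := (Finset.mem_filter.mp hcmem).2
      omega
    have hsubset : hCfin.toFinset.filter (fun c => 0 < cc p N c) ⊆
        hCsfin.toFinset := by
      intro c hcmem
      obtain ⟨hc1, hc2⟩ := Finset.mem_filter.mp hcmem
      rw [Set.Finite.mem_toFinset] at hc1 ⊢
      exact ⟨hC hc1, hc2⟩
    have hpos : ∑ c ∈ hCfin.toFinset.filter (fun c => 0 < cc p N c), cc p N c ≤
        ∑ c ∈ hCsfin.toFinset, cc p N c := by
      apply Finset.sum_le_sum_of_subset_of_nonneg hsubset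
      intro c hcmem _
      have := (Set.Finite.mem_toFinset hCsfin).mp hcmem
      exact le_of_lt this.2
    omega
  have : (cost p N u Cs : ℤ) ≤ (cost p N u C : ℤ) := by omega
  exact_mod_cast this
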